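/- Let g: S² → ℝ be continuous with g ≥ 0, and let M be a 3×3 real symmetric positive definite matrix such that ∫_{S²} ω_i ω_j g(ω) (Mω·ω)^{-3/2} dH²(ω) = δ_{ij} for all i, j ∈ {1,2,3}. Define P(x) = (1/2) ∫_{S²} max(1 − α(x,ω)², 0) · g(ω) (Mω·ω)^{-1/2} dH²(ω) + |x|²/2, where α(x,ω) = (x·ω)(Mω·ω)^{-1/2}. Then P(x) = P(0) for every x in E = { y ∈ ℝ³ : M⁻¹y · y ≤ 1 }, and P(x) ≥ P(0) for every x ∈ ℝ³. -/

import Mathlib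

open MeasureTheory Metric Matrix
open scoped ENNReal

noncomputable section

abbrev E3 := EuclideanSpace ℝ (Fin 3)

/-- The anisotropic kernel `W(x) = |x|⁻¹ Ψ(x/|x|)` as a real-valued function. -/
def W (Ψ : E3 → ℝ) (x : E3) : ℝ := ‖x‖⁻¹ * Ψ (‖x‖⁻¹ • x)

open Classical in
/-- The kernel with the convention `W(0) = +∞`, with values in `ℝ≥0∞`. -/
def kern (Ψ : E3 → ℝ) (x : E3) : ℝ≥0∞ :=
  if x = 0 then ∞ else ENNReal.ofReal (W Ψ x)

/-- The nonlocal energy `I(μ) = ∬ W(x-y) dμ(y) dμ(x) + ∫ |x|² dμ(x)`. -/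
def energy (Ψ : E3 → ℝ) (μ : Measure E3) : ℝ≥0∞ :=
  (∫⁻ x, ∫⁻ y, kern Ψ (x - y) ∂μ ∂μ) + ∫⁻ x, ENNReal.ofReal (‖x‖ ^ 2) ∂μ

/-- Fourier transform with the convention `φ̂(ξ) = (2π)^{-3/2} ∫ φ(x) e^{-i ξ·x} dx`. -/
def ftransform (φ : E3 → ℂ) (ξ : E3) : ℂ :=
  ((((2 * Real.pi) ^ ((3:ℝ)/2))⁻¹ : ℝ) : ℂ) *
    ∫ x : E3, φ x * Complex.exp (-((inner ℝ ξ x : ℝ) : ℂ) * Complex.I)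

/-- The hypothesis that the Fourier transform of `W` is `h(ξ/|ξ|)|ξ|⁻²`, in the sense of
tempered distributions: `∫ W(x) φ̂(x) dx = ∫ h(ξ/|ξ|)|ξ|⁻² φ(ξ) dξ` for every Schwartz `φ`. -/
def FourierRep (Ψ h : E3 → ℝ) : Prop :=
  ∀ φ : SchwartzMap E3 ℂ,
    ∫ x : E3, (W Ψ x : ℂ) * ftransform (fun y => φ y) x
      = ∫ ξ : E3, ((h (‖ξ‖⁻¹ • ξ) : ℝ) : ℂ) * (((‖ξ‖ ^ 2)⁻¹ : ℝ) : ℂ) * φ ξ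

/-- Membership in `SO(3)`. -/
def IsSO3 (R : Matrix (Fin 3) (Fin 3) ℝ) : Prop := R * Rᵀ = 1 ∧ R.det = 1

/-- The solid ellipsoid `R D(a) B̄`. -/
def ellipsoid (a : Fin 3 → ℝ) (R : Matrix (Fin 3) (Fin 3) ℝ) : Set E3 :=
  (Matrix.toEuclideanLin (R * Matrix.diagonal a)) '' Metric.closedBall 0 1

/-- The ellipsoid law: normalised Lebesgue measure on the ellipsoid. -/
def ellipsoidLaw (a : Fin 3 → ℝ) (R : Matrix (Fin 3) (Fin 3) ℝ) : Measure E3 :=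
  (volume (ellipsoid a R))⁻¹ • volume.restrict (ellipsoid a R)

/-- The semi-ellipsoid law supported on the ellipse `R Ẽ₀(a₁,a₂)`: the pushforward under
`(x₁,x₂) ↦ R(x₁,x₂,0)` of the measure on `ℝ²` with density
`(3/(2π a₁ a₂))·√(1 − x₁²/a₁² − x₂²/a₂²)` (the density vanishes outside the ellipse). -/
def semiEllipsoidLaw (a₁ a₂ : ℝ) (R : Matrix (Fin 3) (Fin 3) ℝ) : Measure E3 :=
  Measure.map
    (fun p : ℝ × ℝ =>
      Matrix.toEuclideanLin R ((EuclideanSpace.equiv (Fin 3) ℝ).symm ![p.1, p.2, 0]))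
    ((volume : Measure (ℝ × ℝ)).withDensity fun p =>
      ENNReal.ofReal ((3 / (2 * Real.pi * a₁ * a₂)) *
        Real.sqrt (1 - p.1 ^ 2 / a₁ ^ 2 - p.2 ^ 2 / a₂ ^ 2)))

/-- The quadratic form `Mω·ω`. -/
def qf (M : Matrix (Fin 3) (Fin 3) ℝ) (ω : E3) : ℝ := inner ℝ (Matrix.toEuclideanLin M ω) ω

/-- `α(x,ω) = (x·ω)(Mω·ω)^{-1/2}`. -/
def alphaM (M : Matrix (Fin 3) (Fin 3) ℝ) (x ω : E3) : ℝ :=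
  (inner ℝ x ω : ℝ) / Real.sqrt (qf M ω)

/-- The potential
`P(x) = (1/2)∫_{S²} max(1 − α(x,ω)², 0) g(ω)(Mω·ω)^{-1/2} dH²(ω) + |x|²/2`. -/
def Pfun (M : Matrix (Fin 3) (Fin 3) ℝ) (g : E3 → ℝ) (x : E3) : ℝ :=
  (1/2) * (∫ ω in Metric.sphere (0:E3) 1,
      max (1 - alphaM M x ω ^ 2) 0 * g ω * (Real.sqrt (qf M ω))⁻¹ ∂μH[2])
    + ‖x‖ ^ 2 / 2

lemma qf_eq' (M : Matrix (Fin 3) (Fin 3) ℝ) (ω : E3) :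
    qf M ω = dotProduct (WithLp.equiv 2 (Fin 3 → ℝ) ω) (M *ᵥ (WithLp.equiv 2 (Fin 3 → ℝ) ω)) := by
  simp [qf, PiLp.inner_apply, Matrix.toEuclideanLin_apply, dotProduct, RCLike.inner_apply,
    mul_comm]

lemma qf_pos' (M : Matrix (Fin 3) (Fin 3) ℝ) (hM : M.PosDef) (ω : E3) (hω : ω ≠ 0) :
    0 < qf M ω := by
  rw [qf_eq']
  have h0 : (WithLp.equiv 2 (Fin 3 → ℝ)) ω ≠ 0 := by
    intro h; apply hω
    exact (WithLp.equiv 2 (Fin 3 → ℝ)).injective (by simpa using h)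
  simpa using hM.dotProduct_mulVec_pos h0

lemma inner_eq_sum' (x ω : E3) : (inner ℝ x ω : ℝ) = ∑ i, x i * ω i := by
  simp [PiLp.inner_apply, RCLike.inner_apply, mul_comm]

lemma cs_qf' (M : Matrix (Fin 3) (Fin 3) ℝ) (hM : M.PosDef) (x ω : E3) :
    (inner ℝ x ω : ℝ) ^ 2 ≤ qf M⁻¹ x * qf M ω := by
  have hMt : Mᵀ = M := by
    have h := hM.1
    rwa [Matrix.IsHermitian, conjTranspose_eq_transpose_of_trivial] at h
  set B : (Fin 3 → ℝ) → (Fin 3 → ℝ) → ℝ := fun u v => u ⬝ᵥ (M *ᵥ v) with hB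
  have hsymm : ∀ u v, B u v = B v u := by
    intro u v
    rw [hB]
    simp only
    rw [Matrix.dotProduct_mulVec, ← Matrix.mulVec_transpose, hMt, dotProduct_comm]
  have hinv : IsUnit M.det := isUnit_iff_ne_zero.2 (ne_of_gt hM.det_pos)
  let c : PreInnerProductSpace.Core ℝ (Fin 3 → ℝ) :=
  { inner := B
    conj_inner_symm := fun u v => by simpa using hsymm v u
    re_inner_nonneg := fun u => by
      have h := hM.posSemidef.dotProduct_mulVec_nonneg u
      rw [star_trivial] at h
      simpa [hB] using h
    add_left := fun u v w => by simp [hB, add_dotProduct]; try ring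
    smul_left := fun u v r => by simp [hB, smul_dotProduct]; try ring }
  set x' : Fin 3 → ℝ := (WithLp.equiv 2 (Fin 3 → ℝ)) x with hx'
  set ω' : Fin 3 → ℝ := (WithLp.equiv 2 (Fin 3 → ℝ)) ω with hω'
  set u : Fin 3 → ℝ := M⁻¹ *ᵥ x' with hu
  have key := @InnerProductSpace.Core.inner_mul_inner_self_le ℝ (Fin 3 → ℝ) _ _ _ c u ω'
  have hBu : B u ω' = x' ⬝ᵥ ω' := by
    rw [hsymm, hB]
    simp only
    rw [hu, Matrix.mulVec_mulVec, Matrix.mul_nonsing_inv M hinv, Matrix.one_mulVec,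
      dotProduct_comm]
  have hBuu : B u u = qf M⁻¹ x := by
    rw [hB]; simp only
    rw [hu, Matrix.mulVec_mulVec, Matrix.mul_nonsing_inv M hinv, Matrix.one_mulVec,
      qf_eq', dotProduct_comm]
  have hBωω : B ω' ω' = qf M ω := (qf_eq' M ω).symm
  have hinner : (inner ℝ x ω : ℝ) = x' ⬝ᵥ ω' := by
    rw [inner_eq_sum']; rfl
  have key' : ‖B u ω'‖ * ‖B ω' u‖ ≤ B u u * B ω' ω' := by
    exact key
  rw [hsymm ω' u, hBu, hBuu, hBωω] at key'
  rw [hinner, sq]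
  calc x' ⬝ᵥ ω' * (x' ⬝ᵥ ω') ≤ ‖x' ⬝ᵥ ω'‖ * ‖x' ⬝ᵥ ω'‖ := by
        rw [Real.norm_eq_abs]
        nlinarith [abs_nonneg (x' ⬝ᵥ ω'), le_abs_self (x' ⬝ᵥ ω'), neg_abs_le (x' ⬝ᵥ ω')]
    _ ≤ qf M⁻¹ x * qf M ω := key'

/-- if the first Euler–Lagrange (stationarity) condition
`∫_{S²} ω_i ω_j g(ω)(Mω·ω)^{-3/2} dH² = δ_{ij}` holds, then the potential `P` is constant on
the ellipsoid `E = {y : M⁻¹y·y ≤ 1}` and `P ≥ P(0)` everywhere. -/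
theorem potential_constant_on_ellipsoid_and_min
    (g : E3 → ℝ) (hgcont : ContinuousOn g (Metric.sphere (0:E3) 1))
    (hgnonneg : ∀ ω ∈ Metric.sphere (0:E3) 1, 0 ≤ g ω)
    (M : Matrix (Fin 3) (Fin 3) ℝ) (hM : M.PosDef)
    (hstat : ∀ i j : Fin 3,
      (∫ ω in Metric.sphere (0:E3) 1,
          ω i * ω j * g ω * ((qf M ω) ^ ((3:ℝ)/2))⁻¹ ∂μH[2])
        = if i = j then 1 else 0) :
    (∀ x : E3, qf M⁻¹ x ≤ 1 → Pfun M g x = Pfun M g 0) ∧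
    (∀ x : E3, Pfun M g 0 ≤ Pfun M g x) := by
  classical
  set S : Set E3 := Metric.sphere (0:E3) 1 with hSdef
  have hSmeas : MeasurableSet S := (isClosed_sphere).measurableSet
  have hScomp : IsCompact S := isCompact_sphere 0 1
  have hωne : ∀ ω ∈ S, ω ≠ (0:E3) := by
    intro ω hω h0
    rw [hSdef, mem_sphere_zero_iff_norm] at hω
    rw [h0] at hω; simp at hω
  have hqpos : ∀ ω ∈ S, 0 < qf M ω := fun ω hω => qf_pos' M hM ω (hωne ω hω)
  have hqcont : Continuous (qf M) := by
    have h1 : Continuous (Matrix.toEuclideanLin M : E3 →ₗ[ℝ] E3) :=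
      LinearMap.continuous_of_finiteDimensional _
    exact h1.inner continuous_id
  -- the function t = g * (qf^{3/2})⁻¹
  set t : E3 → ℝ := fun ω => g ω * ((qf M ω) ^ ((3:ℝ)/2))⁻¹ with htdef
  have htnonneg : ∀ ω ∈ S, 0 ≤ t ω := fun ω hω =>
    mul_nonneg (hgnonneg ω hω) (inv_nonneg.2 (Real.rpow_nonneg (hqpos ω hω).le _))
  have htcontOn : ContinuousOn t S := by
    apply hgcont.mul
    apply ContinuousOn.inv₀
    · exact hqcont.continuousOn.rpow_const (fun ω hω => Or.inl (hqpos ω hω).ne')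
    · intro ω hω; exact (Real.rpow_pos_of_pos (hqpos ω hω) _).ne'
  have hcoord : ∀ i : Fin 3, Continuous fun ω : E3 => ω i := by
    intro i
    exact (EuclideanSpace.proj (𝕜 := ℝ) i).continuous
  -- restated stationarity
  have hstat' : ∀ i j : Fin 3,
      (∫ ω in S, ω i * ω j * t ω ∂μH[2]) = if i = j then 1 else 0 := by
    intro i j
    rw [← hstat i j]
    exact integral_congr_ae (Filter.Eventually.of_forall fun ω => by
      simp only [htdef]; ring)
  have hmeas_h : ∀ i j : Fin 3,
      AEStronglyMeasurable (fun ω : E3 => ω i * ω j * t ω) ((μH[2]).restrict S) :=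
    fun i j => ((((hcoord i).continuousOn.mul
      (hcoord j).continuousOn).mul htcontOn)).aestronglyMeasurable hSmeas
  have hdiag_int : ∀ i : Fin 3, IntegrableOn (fun ω : E3 => ω i * ω i * t ω) S μH[2] := by
    intro i
    by_contra hcon
    have h0 : (∫ ω in S, ω i * ω i * t ω ∂μH[2]) = 0 := integral_undef hcon
    rw [hstat' i i] at h0
    simp at h0
  have hij_int : ∀ i j : Fin 3, IntegrableOn (fun ω : E3 => ω i * ω j * t ω) S μH[2] := by
    intro i j
    refine Integrable.mono' (((hdiag_int i).add (hdiag_int j)).const_mul (1/2))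
      (hmeas_h i j) ?_
    refine (ae_restrict_iff' hSmeas).2 (Filter.Eventually.of_forall fun ω hω => ?_)
    have ht0 := htnonneg ω hω
    have habs : |ω i * ω j| ≤ (ω i * ω i + ω j * ω j) / 2 := by
      rw [abs_mul]
      nlinarith [sq_nonneg (|ω i| - |ω j|), abs_nonneg (ω i), abs_nonneg (ω j),
        sq_abs (ω i), sq_abs (ω j)]
    have : ‖ω i * ω j * t ω‖ = |ω i * ω j| * t ω := by
      rw [Real.norm_eq_abs, abs_mul, abs_of_nonneg ht0]
    rw [this]
    calc |ω i * ω j| * t ω ≤ ((ω i * ω i + ω j * ω j) / 2) * t ω :=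
          mul_le_mul_of_nonneg_right habs ht0
      _ = 1/2 * (ω i * ω i * t ω + ω j * ω j * t ω) := by ring
  have hsum1 : ∀ ω ∈ S, (∑ i : Fin 3, ω i * ω i) = 1 := by
    intro ω hω
    rw [hSdef, mem_sphere_zero_iff_norm] at hω
    have := congrArg (fun r : ℝ => r ^ 2) hω
    simp only [one_pow] at this
    rw [EuclideanSpace.norm_eq] at this
    rw [Real.sq_sqrt (by positivity)] at this
    calc (∑ i : Fin 3, ω i * ω i) = ∑ i : Fin 3, ‖ω i‖ ^ 2 := by
          refine Finset.sum_congr rfl fun i _ => ?_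
          rw [Real.norm_eq_abs, sq_abs, sq]
      _ = 1 := this
  have ht_int : IntegrableOn t S μH[2] := by
    have hsum : IntegrableOn (fun ω : E3 => ∑ i : Fin 3, ω i * ω i * t ω) S μH[2] :=
      integrable_finset_sum _ (fun i _ => hdiag_int i)
    refine hsum.congr_fun (fun ω hω => ?_) hSmeas
    beta_reduce
    rw [← Finset.sum_mul, hsum1 ω hω, one_mul]
  -- upper bound for qf on S
  obtain ⟨ω₀, hω₀S, hω₀max⟩ := hScomp.exists_isMaxOn
    (NormedSpace.sphere_nonempty.2 zero_le_one) hqcont.continuousOn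
  set Cq : ℝ := qf M ω₀ with hCq
  have hCqb : ∀ ω ∈ S, qf M ω ≤ Cq := fun ω hω => hω₀max hω
  -- f0 = g * (sqrt qf)⁻¹ and its relation with t
  set f0 : E3 → ℝ := fun ω => g ω * (Real.sqrt (qf M ω))⁻¹ with hf0def
  have hrpow32 : ∀ ω ∈ S, (qf M ω) ^ ((3:ℝ)/2) = qf M ω * Real.sqrt (qf M ω) := by
    intro ω hω
    have hq := hqpos ω hω
    rw [show (3:ℝ)/2 = 1 + 1/2 by norm_num, Real.rpow_add hq, Real.rpow_one,
      ← Real.sqrt_eq_rpow]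
  have hf0_eq : ∀ ω ∈ S, f0 ω = t ω * qf M ω := by
    intro ω hω
    have hq := hqpos ω hω
    have hs : (0:ℝ) < Real.sqrt (qf M ω) := Real.sqrt_pos.2 hq
    rw [hf0def, htdef]
    simp only
    rw [hrpow32 ω hω]
    field_simp
  have hf0contOn : ContinuousOn f0 S := by
    apply hgcont.mul
    apply ContinuousOn.inv₀
    · exact (Real.continuous_sqrt.comp hqcont).continuousOn
    · intro ω hω; exact (Real.sqrt_pos.2 (hqpos ω hω)).ne'
  have hf0nonneg : ∀ ω ∈ S, 0 ≤ f0 ω := fun ω hω =>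
    mul_nonneg (hgnonneg ω hω) (inv_nonneg.2 (Real.sqrt_nonneg _))
  have hf0_int : IntegrableOn f0 S μH[2] := by
    refine Integrable.mono' (ht_int.const_mul (max Cq 0))
      (hf0contOn.aestronglyMeasurable hSmeas) ?_
    refine (ae_restrict_iff' hSmeas).2 (Filter.Eventually.of_forall fun ω hω => ?_)
    rw [Real.norm_eq_abs, abs_of_nonneg (hf0nonneg ω hω), hf0_eq ω hω]
    calc t ω * qf M ω ≤ t ω * max Cq 0 :=
          mul_le_mul_of_nonneg_left (le_trans (hCqb ω hω) (le_max_left _ _)) (htnonneg ω hω)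
      _ = max Cq 0 * t ω := by ring
  -- expansion of (inner x ω)^2 * t ω
  have hexp : ∀ (x : E3) (ω : E3), (inner ℝ x ω : ℝ)^2 * t ω
      = ∑ i : Fin 3, ∑ j : Fin 3, x i * x j * (ω i * ω j * t ω) := by
    intro x ω
    rw [inner_eq_sum', sq, Finset.sum_mul_sum, Finset.sum_mul]
    refine Finset.sum_congr rfl fun i _ => ?_
    rw [Finset.sum_mul]
    exact Finset.sum_congr rfl fun j _ => by ring
  have hx2_int : ∀ x : E3, IntegrableOn (fun ω : E3 => (inner ℝ x ω : ℝ)^2 * t ω) S μH[2] := by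
    intro x
    have : IntegrableOn (fun ω : E3 =>
        ∑ i : Fin 3, ∑ j : Fin 3, x i * x j * (ω i * ω j * t ω)) S μH[2] :=
      integrable_finset_sum _ (fun i _ =>
        integrable_finset_sum _ (fun j _ => (hij_int i j).const_mul _))
    exact this.congr (Filter.Eventually.of_forall fun ω => (hexp x ω).symm)
  -- the key integral identity
  have hKI : ∀ x : E3, (∫ ω in S, (inner ℝ x ω : ℝ)^2 * t ω ∂μH[2]) = ‖x‖^2 := by
    intro x
    have h1 : (∫ ω in S, (inner ℝ x ω : ℝ)^2 * t ω ∂μH[2])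
        = ∫ ω in S, ∑ i : Fin 3, ∑ j : Fin 3, x i * x j * (ω i * ω j * t ω) ∂μH[2] :=
      integral_congr_ae (Filter.Eventually.of_forall fun ω => hexp x ω)
    rw [h1, integral_finset_sum _ (fun i _ =>
      integrable_finset_sum _ (fun j _ => (hij_int i j).const_mul _))]
    have h2 : ∀ i : Fin 3, (∫ ω in S, ∑ j : Fin 3, x i * x j * (ω i * ω j * t ω) ∂μH[2])
        = x i * x i := by
      intro i
      rw [integral_finset_sum _ (fun j _ => (hij_int i j).const_mul _)]
      have h3 : ∀ j : Fin 3, (∫ ω in S, x i * x j * (ω i * ω j * t ω) ∂μH[2])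
          = x i * x j * (if i = j then 1 else 0) := by
        intro j
        rw [integral_const_mul, hstat' i j]
      simp only [h3]
      simp [mul_ite]
    simp only [h2]
    have : ‖x‖^2 = (inner ℝ x x : ℝ) := (real_inner_self_eq_norm_sq x).symm
    rw [this, inner_eq_sum']
  -- pointwise identity for the non-truncated integrand
  have hsub_eq : ∀ (x : E3), ∀ ω ∈ S, (1 - alphaM M x ω ^ 2) * g ω * (Real.sqrt (qf M ω))⁻¹
      = f0 ω - (inner ℝ x ω : ℝ)^2 * t ω := by
    intro x ω hω
    have hq := hqpos ω hω
    have hs : (0:ℝ) < Real.sqrt (qf M ω) := Real.sqrt_pos.2 hq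
    rw [alphaM, div_pow, Real.sq_sqrt hq.le, hf0def, htdef]
    simp only
    rw [hrpow32 ω hω]
    field_simp
  have hsub_int : ∀ x : E3, IntegrableOn
      (fun ω : E3 => (1 - alphaM M x ω ^ 2) * g ω * (Real.sqrt (qf M ω))⁻¹) S μH[2] := by
    intro x
    exact IntegrableOn.congr_fun (hf0_int.sub (hx2_int x))
      (fun ω hω => (hsub_eq x ω hω).symm) hSmeas
  have hsub_integral : ∀ x : E3,
      (∫ ω in S, (1 - alphaM M x ω ^ 2) * g ω * (Real.sqrt (qf M ω))⁻¹ ∂μH[2])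
        = (∫ ω in S, f0 ω ∂μH[2]) - ‖x‖^2 := by
    intro x
    rw [setIntegral_congr_fun hSmeas (fun ω hω => hsub_eq x ω hω),
      integral_sub hf0_int (hx2_int x), hKI x]
  -- integrability of the max-integrand
  have hmax_contOn : ∀ x : E3, ContinuousOn
      (fun ω : E3 => max (1 - alphaM M x ω ^ 2) 0 * g ω * (Real.sqrt (qf M ω))⁻¹) S := by
    intro x
    have halpha : ContinuousOn (fun ω : E3 => alphaM M x ω) S := by
      apply ContinuousOn.div
      · exact (continuous_const.inner continuous_id).continuousOn
      · exact (Real.continuous_sqrt.comp hqcont).continuousOn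
      · intro ω hω; exact (Real.sqrt_pos.2 (hqpos ω hω)).ne'
    have h1 : ContinuousOn (fun ω : E3 => max (1 - alphaM M x ω ^ 2) 0) S :=
      (continuous_id.max continuous_const).comp_continuousOn
        (continuousOn_const.sub (halpha.pow 2))
    exact (h1.mul hgcont).mul (ContinuousOn.inv₀
      (Real.continuous_sqrt.comp hqcont).continuousOn
      (fun ω hω => (Real.sqrt_pos.2 (hqpos ω hω)).ne'))
  have hmax_int : ∀ x : E3, IntegrableOn
      (fun ω : E3 => max (1 - alphaM M x ω ^ 2) 0 * g ω * (Real.sqrt (qf M ω))⁻¹) S μH[2] := by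
    intro x
    refine Integrable.mono' hf0_int ((hmax_contOn x).aestronglyMeasurable hSmeas) ?_
    refine (ae_restrict_iff' hSmeas).2 (Filter.Eventually.of_forall fun ω hω => ?_)
    have h1 : (0:ℝ) ≤ max (1 - alphaM M x ω ^ 2) 0 := le_max_right _ _
    have h2 : max (1 - alphaM M x ω ^ 2) 0 ≤ 1 := by
      apply max_le _ zero_le_one
      nlinarith [sq_nonneg (alphaM M x ω)]
    have hgs : 0 ≤ g ω * (Real.sqrt (qf M ω))⁻¹ := hf0nonneg ω hω
    rw [Real.norm_eq_abs, abs_of_nonneg (mul_nonneg (mul_nonneg h1 (hgnonneg ω hω))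
      (inv_nonneg.2 (Real.sqrt_nonneg _)))]
    calc max (1 - alphaM M x ω ^ 2) 0 * g ω * (Real.sqrt (qf M ω))⁻¹
        = max (1 - alphaM M x ω ^ 2) 0 * (g ω * (Real.sqrt (qf M ω))⁻¹) := by ring
      _ ≤ 1 * (g ω * (Real.sqrt (qf M ω))⁻¹) := mul_le_mul_of_nonneg_right h2 hgs
      _ = f0 ω := by rw [one_mul]
  -- value at 0
  have hP0 : Pfun M g 0 = (1/2) * ∫ ω in S, f0 ω ∂μH[2] := by
    have h0 : ∀ ω : E3, max (1 - alphaM M (0:E3) ω ^ 2) 0 * g ω * (Real.sqrt (qf M ω))⁻¹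
        = f0 ω := by
      intro ω
      have : alphaM M (0:E3) ω = 0 := by
        rw [alphaM, inner_zero_left, zero_div]
      rw [this]
      norm_num [hf0def]
    rw [Pfun]
    simp only [h0]
    rw [norm_zero]
    norm_num
    rfl
  refine ⟨?_, ?_⟩
  · -- constant on the ellipsoid
    intro x hx
    have hmax_eq : ∀ ω ∈ S, max (1 - alphaM M x ω ^ 2) 0 * g ω * (Real.sqrt (qf M ω))⁻¹
        = (1 - alphaM M x ω ^ 2) * g ω * (Real.sqrt (qf M ω))⁻¹ := by
      intro ω hω
      have hq := hqpos ω hω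
      have hα : alphaM M x ω ^ 2 ≤ 1 := by
        rw [alphaM, div_pow, Real.sq_sqrt hq.le]
        rw [div_le_one hq]
        calc (inner ℝ x ω : ℝ)^2 ≤ qf M⁻¹ x * qf M ω := cs_qf' M hM x ω
          _ ≤ 1 * qf M ω := mul_le_mul_of_nonneg_right hx hq.le
          _ = qf M ω := one_mul _
      rw [max_eq_left (by linarith)]
    have : (∫ ω in S, max (1 - alphaM M x ω ^ 2) 0 * g ω * (Real.sqrt (qf M ω))⁻¹ ∂μH[2])
        = (∫ ω in S, f0 ω ∂μH[2]) - ‖x‖^2 := by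
      rw [setIntegral_congr_fun hSmeas (fun ω hω => hmax_eq ω hω), hsub_integral x]
    rw [Pfun, this, hP0]
    ring
  · -- global minimum
    intro x
    have hmono : (∫ ω in S, (1 - alphaM M x ω ^ 2) * g ω * (Real.sqrt (qf M ω))⁻¹ ∂μH[2])
        ≤ ∫ ω in S, max (1 - alphaM M x ω ^ 2) 0 * g ω * (Real.sqrt (qf M ω))⁻¹ ∂μH[2] := by
      refine setIntegral_mono_on (hsub_int x) (hmax_int x) hSmeas (fun ω hω => ?_)
      have hgs : 0 ≤ g ω * (Real.sqrt (qf M ω))⁻¹ := hf0nonneg ω hω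
      have h1 : (1 - alphaM M x ω ^ 2) ≤ max (1 - alphaM M x ω ^ 2) 0 := le_max_left _ _
      calc (1 - alphaM M x ω ^ 2) * g ω * (Real.sqrt (qf M ω))⁻¹
          = (1 - alphaM M x ω ^ 2) * (g ω * (Real.sqrt (qf M ω))⁻¹) := by ring
        _ ≤ max (1 - alphaM M x ω ^ 2) 0 * (g ω * (Real.sqrt (qf M ω))⁻¹) :=
            mul_le_mul_of_nonneg_right h1 hgs
        _ = max (1 - alphaM M x ω ^ 2) 0 * g ω * (Real.sqrt (qf M ω))⁻¹ := by ring
    rw [hsub_integral x] at hmono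
    rw [hP0, Pfun]
    nlinarith [hmono]


end
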